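/- Let {w_k} be a bounded sequence in H converging weakly to a point p, let z_k = P_C(w_k − F(w_k)), and suppose ‖w_k − z_k‖ → 0 as k → ∞. Then p belongs to the solution set SOL, i.e., p ∈ C and ⟨F(p), y − p⟩ ≥ 0 for all y ∈ C. -/

import Mathlib

open scoped RealInnerProductSpace
open Filter Topology

/-- A weak limit of a bounded sequence `{w_k}` with `‖w_k − P_C(w_k − F(w_k))‖ → 0`
belongs to the solution set of VI(F,C). -/
theorem statement8
    {H : Type*} [NormedAddCommGroup H] [InnerProductSpace ℝ H] [CompleteSpace H]
    (C : Set H) (hCne : C.Nonempty) (hCcl : IsClosed C) (hCcx : Convex ℝ C)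
    (F : H → H)
    (hFmono : ∀ x y : H, 0 ≤ ⟪F x - F y, x - y⟫)
    (hFuc : ∀ S : Set H, Bornology.IsBounded S → UniformContinuousOn F S)
    (w z : ℕ → H) (p : H)
    (hbdd : Bornology.IsBounded (Set.range w))
    (hweak : ∀ f : H, Tendsto (fun k => ⟪f, w k⟫) atTop (nhds ⟪f, p⟫))
    -- z k = P_C (w k - F (w k)), via the variational characterization of the projection
    (hzmem : ∀ k, z k ∈ C)
    (hzproj : ∀ k, ∀ v ∈ C, ⟪(w k - F (w k)) - z k, v - z k⟫ ≤ 0)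
    (hlim : Tendsto (fun k => ‖w k - z k‖) atTop (nhds 0)) :
    p ∈ C ∧ ∀ v ∈ C, 0 ≤ ⟪F p, v - p⟫ := by
  -- w k - z k → 0 strongly
  have hwz : Tendsto (fun k => w k - z k) atTop (𝓝 0) :=
    tendsto_zero_iff_norm_tendsto_zero.2 hlim
  -- z k ⇀ p
  have hzweak : ∀ f : H, Tendsto (fun k => ⟪f, z k⟫) atTop (𝓝 ⟪f, p⟫) := by
    intro f
    have h1 : Tendsto (fun k => ⟪f, w k - z k⟫) atTop (𝓝 (0 : ℝ)) := by
      have := Filter.Tendsto.inner (𝕜 := ℝ) (tendsto_const_nhds (x := f) (f := atTop)) hwz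
      simpa using this
    have := (hweak f).sub h1
    simpa [inner_sub_right] using this
  -- bounds
  obtain ⟨M, hM⟩ := hbdd.exists_norm_le
  have hM' : BddAbove (Set.range fun k => ‖w k - z k‖) := hlim.bddAbove_range
  obtain ⟨M', hM'⟩ := hM'
  have hMw : ∀ k, ‖w k‖ ≤ M := fun k => hM _ ⟨k, rfl⟩
  have hMwz : ∀ k, ‖w k - z k‖ ≤ M' := fun k => hM' ⟨k, rfl⟩
  have hM'0 : (0:ℝ) ≤ M' := le_trans (norm_nonneg _) (hMwz 0)
  set R : ℝ := M + M' with hR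
  have hzR : ∀ k, ‖z k‖ ≤ R := by
    intro k
    have : z k = w k - (w k - z k) := by abel
    calc ‖z k‖ = ‖w k - (w k - z k)‖ := by rw [← this]
      _ ≤ ‖w k‖ + ‖w k - z k‖ := norm_sub_le _ _
      _ ≤ M + M' := add_le_add (hMw k) (hMwz k)
  have hwR : ∀ k, ‖w k‖ ≤ R := fun k => le_trans (hMw k) (by linarith)
  -- F (w k) - F (z k) → 0, by uniform continuity on closedBall 0 R
  have hFwz : Tendsto (fun k => F (w k) - F (z k)) atTop (𝓝 0) := by
    rw [tendsto_zero_iff_norm_tendsto_zero]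
    rw [Metric.tendsto_atTop]
    intro ε hε
    have huc := hFuc (Metric.closedBall 0 R) Metric.isBounded_closedBall
    rw [Metric.uniformContinuousOn_iff] at huc
    obtain ⟨δ, hδ, hδ'⟩ := huc ε hε
    have := (Metric.tendsto_atTop.1 hlim) δ hδ
    obtain ⟨N, hN⟩ := this
    refine ⟨N, fun k hk => ?_⟩
    have h1 : w k ∈ Metric.closedBall (0:H) R := by
      simpa [Metric.mem_closedBall, dist_eq_norm] using hwR k
    have h2 : z k ∈ Metric.closedBall (0:H) R := by
      simpa [Metric.mem_closedBall, dist_eq_norm] using hzR k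
    have h3 : dist (w k) (z k) < δ := by
      have := hN k hk
      rw [Real.dist_eq] at this
      rw [dist_eq_norm]
      calc ‖w k - z k‖ = |‖w k - z k‖| := (abs_of_nonneg (norm_nonneg _)).symm
        _ = |‖w k - z k‖ - 0| := by ring_nf
        _ < δ := this
    have := hδ' _ h1 _ h2 h3
    rw [dist_eq_norm] at this
    simpa [Real.dist_eq, abs_of_nonneg (norm_nonneg (F (w k) - F (z k)))] using this
  -- p ∈ C
  obtain ⟨q, hqC, hq⟩ := exists_norm_eq_iInf_of_complete_convex hCne hCcl.isComplete hCcx p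
  have hqchar := (norm_eq_iInf_iff_real_inner_le_zero hCcx hqC).1 hq
  have hpq : p = q := by
    have hk : ∀ k, ⟪p - q, z k - q⟫ ≤ 0 := fun k => hqchar _ (hzmem k)
    have htend : Tendsto (fun k => ⟪p - q, z k - q⟫) atTop (𝓝 ⟪p - q, p - q⟫) := by
      have := (hzweak (p - q)).sub (tendsto_const_nhds (x := ⟪p - q, q⟫))
      simpa only [inner_sub_right] using this
    have : ⟪p - q, p - q⟫ ≤ 0 := le_of_tendsto htend (Eventually.of_forall hk)
    have h0 : p - q = 0 := by
      have := real_inner_self_nonneg (x := p - q)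
      have : ⟪p - q, p - q⟫ = 0 := le_antisymm ‹⟪p-q,p-q⟫ ≤ 0› this
      exact inner_self_eq_zero.1 this
    have := sub_eq_zero.1 h0
    exact this
  have hpC : p ∈ C := hpq ▸ hqC
  refine ⟨hpC, ?_⟩
  -- Minty: ∀ v ∈ C, 0 ≤ ⟪F v, v - p⟫
  have hminty : ∀ v ∈ C, 0 ≤ ⟪F v, v - p⟫ := by
    intro v hv
    -- a k := ⟪F v, v - z k⟫ → ⟪F v, v - p⟫
    have ha : Tendsto (fun k => ⟪F v, v - z k⟫) atTop (𝓝 ⟪F v, v - p⟫) := by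
      have := (tendsto_const_nhds (x := ⟪F v, v⟫) (f := atTop)).sub (hzweak (F v))
      simpa [inner_sub_right] using this
    -- error terms → 0
    have hB : ∀ k, ‖v - z k‖ ≤ ‖v‖ + R := fun k =>
      le_trans (norm_sub_le _ _) (by linarith [hzR k])
    have he1 : Tendsto (fun k => ⟪w k - z k, v - z k⟫) atTop (𝓝 0) := by
      refine squeeze_zero_norm (a := fun k => ‖w k - z k‖ * (‖v‖ + R)) ?_ ?_
      · intro k
        calc ‖⟪w k - z k, v - z k⟫‖ = |⟪w k - z k, v - z k⟫| := rfl
          _ ≤ ‖w k - z k‖ * ‖v - z k‖ := abs_real_inner_le_norm _ _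
          _ ≤ ‖w k - z k‖ * (‖v‖ + R) :=
            mul_le_mul_of_nonneg_left (hB k) (norm_nonneg _)
      · have := hlim.mul_const (‖v‖ + R)
        simpa using this
    have he2 : Tendsto (fun k => ⟪F (w k) - F (z k), v - z k⟫) atTop (𝓝 0) := by
      refine squeeze_zero_norm (a := fun k => ‖F (w k) - F (z k)‖ * (‖v‖ + R)) ?_ ?_
      · intro k
        calc ‖⟪F (w k) - F (z k), v - z k⟫‖ = |⟪F (w k) - F (z k), v - z k⟫| := rfl
          _ ≤ ‖F (w k) - F (z k)‖ * ‖v - z k‖ := abs_real_inner_le_norm _ _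
          _ ≤ ‖F (w k) - F (z k)‖ * (‖v‖ + R) :=
            mul_le_mul_of_nonneg_left (hB k) (norm_nonneg _)
      · have := (tendsto_zero_iff_norm_tendsto_zero.1 hFwz).mul_const (‖v‖ + R)
        simpa using this
    have hlow : ∀ k, ⟪w k - z k, v - z k⟫ - ⟪F (w k) - F (z k), v - z k⟫ ≤ ⟪F v, v - z k⟫ := by
      intro k
      have h1 : 0 ≤ ⟪F v - F (z k), v - z k⟫ := hFmono v (z k)
      have h2 : ⟪(w k - F (w k)) - z k, v - z k⟫ ≤ 0 := hzproj k v hv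
      have e1 : ⟪F v - F (z k), v - z k⟫ = ⟪F v, v - z k⟫ - ⟪F (z k), v - z k⟫ := by
        rw [inner_sub_left]
      have e2 : ⟪(w k - F (w k)) - z k, v - z k⟫
          = ⟪w k - z k, v - z k⟫ - ⟪F (w k), v - z k⟫ := by
        rw [show (w k - F (w k)) - z k = (w k - z k) - F (w k) by abel, inner_sub_left]
      have e3 : ⟪F (w k) - F (z k), v - z k⟫
          = ⟪F (w k), v - z k⟫ - ⟪F (z k), v - z k⟫ := by rw [inner_sub_left]
      linarith
    have hlimlow : Tendsto (fun k => ⟪w k - z k, v - z k⟫ - ⟪F (w k) - F (z k), v - z k⟫)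
        atTop (𝓝 0) := by simpa using he1.sub he2
    exact le_of_tendsto_of_tendsto' hlimlow ha hlow
  -- pass from Minty to the VI at p, using continuity of F at p
  intro v hv
  have hFcont : ContinuousAt F p := by
    have huc := hFuc (Metric.closedBall p 1) Metric.isBounded_closedBall
    exact (huc.continuousOn).continuousAt (Metric.closedBall_mem_nhds p one_pos)
  set u : ℕ → H := fun n => p + ((n:ℝ)+1)⁻¹ • (v - p) with hu
  have ht : ∀ n : ℕ, (0:ℝ) < ((n:ℝ)+1)⁻¹ := fun n => by positivity
  have ht1 : ∀ n : ℕ, ((n:ℝ)+1)⁻¹ ≤ 1 := fun n => by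
    rw [inv_le_one_iff₀]; right; linarith [Nat.cast_nonneg (α := ℝ) n]
  have huC : ∀ n, u n ∈ C := by
    intro n
    have := hCcx hpC hv (a := 1 - ((n:ℝ)+1)⁻¹) (b := ((n:ℝ)+1)⁻¹)
      (by linarith [ht1 n]) (le_of_lt (ht n)) (by ring)
    have e : (1 - ((n:ℝ)+1)⁻¹) • p + ((n:ℝ)+1)⁻¹ • v = u n := by
      simp [hu, sub_smul, smul_sub]; abel
    rwa [e] at this
  have hun : ∀ n, 0 ≤ ⟪F (u n), v - p⟫ := by
    intro n
    have := hminty (u n) (huC n)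
    have e : u n - p = ((n:ℝ)+1)⁻¹ • (v - p) := by simp [hu]
    rw [e, real_inner_smul_right] at this
    exact nonneg_of_mul_nonneg_right this (ht n)
  have hutend : Tendsto u atTop (𝓝 p) := by
    have h1 : Tendsto (fun n : ℕ => ((n:ℝ)+1)⁻¹) atTop (𝓝 0) :=
      tendsto_one_div_add_atTop_nhds_zero_nat.congr (fun n => by rw [one_div])
    have h2 : Tendsto (fun n : ℕ => ((n:ℝ)+1)⁻¹ • (v - p)) atTop (𝓝 ((0:ℝ) • (v - p))) :=
      h1.smul_const _
    have := (tendsto_const_nhds (x := p) (f := atTop)).add h2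
    simpa using this
  have hFtend : Tendsto (fun n => ⟪F (u n), v - p⟫) atTop (𝓝 ⟪F p, v - p⟫) :=
    ((hFcont.tendsto.comp hutend).inner tendsto_const_nhds)
  exact ge_of_tendsto' hFtend hun
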